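/- Fix a real number ℓ ≥ 1 and a real number ρ with ρ ≥ 1/2, and let T : ℝ → ℝ be any function such that |T(q)| ≤ 4·√q for all q ≥ 1. For q ≥ 1 set m(q) := ⌊2√q⌋, h(q) := q^ρ, c(q) := q + 1 − T(q) + (ℓ − 1)·(m(q) − √ℓ), φ_q(x) := m(q)·(h(q) − x·√ℓ)² + 2·m(q)·√ℓ·(h(q) − x·√ℓ) + x·c(q) + h(q)·(ℓ − 1), and M(q) := max(⌊h(q)⌋·(ℓ − 1), φ_q(1), φ_q(⌊h(q)/√ℓ⌋)). Then M(q)/q^{2ρ+1/2} tends to 2 as q tends to infinity. -/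

import Mathlib

/-- The function `φ_q` of Theorem 3.3, with `m = ⌊2√q⌋`, `h = q^ρ` and
`c = q + 1 − T(q) + (λ − 1)(m − √λ)`. -/
noncomputable def phiQ (lam ρ : ℝ) (T : ℝ → ℝ) (q x : ℝ) : ℝ :=
  (⌊2 * Real.sqrt q⌋ : ℝ) * (q ^ ρ - x * Real.sqrt lam) ^ 2
    + 2 * (⌊2 * Real.sqrt q⌋ : ℝ) * Real.sqrt lam * (q ^ ρ - x * Real.sqrt lam)
    + x * (q + 1 - T q + (lam - 1) * ((⌊2 * Real.sqrt q⌋ : ℝ) - Real.sqrt lam))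
    + q ^ ρ * (lam - 1)

/-- The quantity `M(q) = max(⌊h⌋(λ−1), φ_q(1), φ_q(⌊h/√λ⌋))` with `h = q^ρ`. -/
noncomputable def MQ (lam ρ : ℝ) (T : ℝ → ℝ) (q : ℝ) : ℝ :=
  max (max ((⌊q ^ ρ⌋ : ℝ) * (lam - 1)) (phiQ lam ρ T q 1))
    (phiQ lam ρ T q ((⌊q ^ ρ / Real.sqrt lam⌋ : ℤ) : ℝ))

open Filter Real

lemma rpow_lim_zero (a : ℝ) (ha : a < 0) :
    Tendsto (fun q : ℝ => q ^ a) atTop (nhds 0) := by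
  have := tendsto_rpow_neg_atTop (show 0 < -a by linarith)
  simpa using this

lemma floor_sqrt_lim : Tendsto (fun q : ℝ => (⌊2 * Real.sqrt q⌋ : ℝ) / Real.sqrt q)
    atTop (nhds 2) := by
  have hs : Tendsto (fun q : ℝ => q ^ (-(1/2) : ℝ)) atTop (nhds 0) :=
    rpow_lim_zero _ (by norm_num)
  have hlow : Tendsto (fun q : ℝ => 2 - q ^ (-(1/2) : ℝ)) atTop (nhds 2) := by
    simpa using (tendsto_const_nhds (x := (2:ℝ))).sub hs
  refine tendsto_of_tendsto_of_tendsto_of_le_of_le' hlow tendsto_const_nhds ?_ ?_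
  · filter_upwards [eventually_ge_atTop (1:ℝ)] with q hq
    have hq0 : (0:ℝ) < q := by linarith
    have hsq : (1:ℝ) ≤ Real.sqrt q := by
      rw [show (1:ℝ) = Real.sqrt 1 by simp]; exact Real.sqrt_le_sqrt hq
    have hsqpos : (0:ℝ) < Real.sqrt q := by linarith
    have hfl : 2 * Real.sqrt q - 1 < (⌊2 * Real.sqrt q⌋ : ℝ) := Int.sub_one_lt_floor _
    have hneg : q ^ (-(1/2) : ℝ) = 1 / Real.sqrt q := by
      rw [Real.sqrt_eq_rpow, Real.rpow_neg hq0.le]; norm_num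
    rw [hneg, le_div_iff₀ hsqpos]
    have h1 : (2 - 1 / Real.sqrt q) * Real.sqrt q = 2 * Real.sqrt q - 1 := by
      field_simp
    nlinarith
  · filter_upwards [eventually_ge_atTop (1:ℝ)] with q hq
    have hsq : (1:ℝ) ≤ Real.sqrt q := by
      rw [show (1:ℝ) = Real.sqrt 1 by simp]; exact Real.sqrt_le_sqrt hq
    have hfl : (⌊2 * Real.sqrt q⌋ : ℝ) ≤ 2 * Real.sqrt q := Int.floor_le _
    rw [div_le_iff₀ (by linarith)]
    linarith

set_option maxHeartbeats 800000 in
theorem stmt_11 (ℓ ρ : ℝ) (hℓ : 1 ≤ ℓ) (hρ : 1 / 2 ≤ ρ)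
    (T : ℝ → ℝ) (hT : ∀ q : ℝ, 1 ≤ q → |T q| ≤ 4 * Real.sqrt q) :
    Filter.Tendsto (fun q : ℝ => MQ ℓ ρ T q / q ^ (2 * ρ + 1 / 2))
      Filter.atTop (nhds 2) := by
  set e : ℝ := 2 * ρ + 1 / 2 with he
  have hsl1 : (1:ℝ) ≤ Real.sqrt ℓ := by
    rw [show (1:ℝ) = Real.sqrt 1 by simp]; exact Real.sqrt_le_sqrt hℓ
  have hslsq : Real.sqrt ℓ ^ 2 = ℓ := Real.sq_sqrt (by linarith)
  have hslℓ : Real.sqrt ℓ ≤ ℓ := by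
    nlinarith [Real.sq_sqrt (show (0:ℝ) ≤ ℓ by linarith), hsl1]
  set K : ℝ := 6 + (ℓ - 1) * (2 + ℓ) + 2 * ℓ with hK
  -- Step 1: φ_q(1)/q^e → 2
  have L1 : Tendsto (fun q : ℝ => phiQ ℓ ρ T q 1 / q ^ e) atTop (nhds 2) := by
    have hD : Tendsto (fun q : ℝ =>
        (phiQ ℓ ρ T q 1 - (⌊2 * Real.sqrt q⌋ : ℝ) * q ^ (2*ρ)) / q ^ e) atTop (nhds 0) := by
      have hg : Tendsto (fun q : ℝ => K * q ^ (1 - e) + ℓ * q ^ (ρ - e)) atTop (nhds 0) := by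
        have h1 : Tendsto (fun q : ℝ => K * q ^ (1 - e)) atTop (nhds 0) := by
          simpa using (rpow_lim_zero (1 - e) (by rw [he]; linarith)).const_mul K
        have h2 : Tendsto (fun q : ℝ => ℓ * q ^ (ρ - e)) atTop (nhds 0) := by
          simpa using (rpow_lim_zero (ρ - e) (by rw [he]; linarith)).const_mul ℓ
        simpa using h1.add h2
      have hgneg : Tendsto (fun q : ℝ => -(K * q ^ (1 - e) + ℓ * q ^ (ρ - e))) atTop (nhds 0) := by
        simpa using hg.neg
      have hev : ∀ᶠ q : ℝ in atTop,
          |(phiQ ℓ ρ T q 1 - (⌊2 * Real.sqrt q⌋ : ℝ) * q ^ (2*ρ)) / q ^ e|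
            ≤ K * q ^ (1 - e) + ℓ * q ^ (ρ - e) := by
        filter_upwards [eventually_ge_atTop (1:ℝ)] with q hq
        have hq0 : (0:ℝ) < q := by linarith
        have hsq1 : (1:ℝ) ≤ Real.sqrt q := by
          rw [show (1:ℝ) = Real.sqrt 1 by simp]; exact Real.sqrt_le_sqrt hq
        have hsqq : Real.sqrt q ≤ q := by
          nlinarith [Real.sq_sqrt hq0.le]
        have hm1 : (⌊2 * Real.sqrt q⌋ : ℝ) ≤ 2 * Real.sqrt q := Int.floor_le _
        have hm0 : (0:ℝ) ≤ (⌊2 * Real.sqrt q⌋ : ℝ) := by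
          have : (0:ℤ) ≤ ⌊2 * Real.sqrt q⌋ := Int.floor_nonneg.2 (by positivity)
          exact_mod_cast this
        have hTq := hT q hq
        rw [abs_le] at hTq
        have hqρ1 : (1:ℝ) ≤ q ^ ρ := Real.one_le_rpow hq (by linarith)
        have hq2ρ : q ^ (2*ρ) = (q ^ ρ) ^ 2 := by
          rw [show (2*ρ) = ρ * 2 by ring, Real.rpow_mul hq0.le]
          norm_num
        have hident : phiQ ℓ ρ T q 1 - (⌊2 * Real.sqrt q⌋ : ℝ) * q ^ (2*ρ) =
            (q + 1 - T q + (ℓ - 1) * ((⌊2 * Real.sqrt q⌋ : ℝ) - Real.sqrt ℓ))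
              - (⌊2 * Real.sqrt q⌋ : ℝ) * ℓ + q ^ ρ * (ℓ - 1) := by
          simp only [phiQ, hq2ρ]
          linear_combination (-(⌊2 * Real.sqrt q⌋ : ℝ)) * hslsq
        have hepos : (0:ℝ) < q ^ e := Real.rpow_pos_of_pos hq0 e
        have habs : |phiQ ℓ ρ T q 1 - (⌊2 * Real.sqrt q⌋ : ℝ) * q ^ (2*ρ)| ≤ K * q + ℓ * q ^ ρ := by
          rw [hident, abs_le, hK]
          constructor <;> nlinarith [mul_le_mul_of_nonneg_left hm1 (show (0:ℝ) ≤ ℓ - 1 by linarith),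
            mul_le_mul_of_nonneg_left hslℓ (show (0:ℝ) ≤ ℓ - 1 by linarith),
            mul_le_mul_of_nonneg_right hm1 (show (0:ℝ) ≤ ℓ by linarith),
            mul_le_mul_of_nonneg_left hqρ1 (show (0:ℝ) ≤ ℓ - 1 by linarith),
            mul_le_mul_of_nonneg_left hsqq (show (0:ℝ) ≤ ℓ - 1 by linarith),
            mul_le_mul_of_nonneg_right hsqq (show (0:ℝ) ≤ ℓ by linarith),
            mul_nonneg (show (0:ℝ) ≤ ℓ - 1 by linarith) hm0,
            mul_le_mul_of_nonneg_left hqρ1 (show (0:ℝ) ≤ ℓ by linarith),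
            mul_nonneg (mul_nonneg (show (0:ℝ) ≤ ℓ - 1 by linarith)
              (show (0:ℝ) ≤ 2 + ℓ by linarith)) (show (0:ℝ) ≤ q - 1 by linarith)]
        rw [abs_div, abs_of_pos hepos, div_le_iff₀ hepos]
        calc |phiQ ℓ ρ T q 1 - (⌊2 * Real.sqrt q⌋ : ℝ) * q ^ (2*ρ)| ≤ K * q + ℓ * q ^ ρ := habs
          _ = (K * q ^ (1 - e) + ℓ * q ^ (ρ - e)) * q ^ e := by
              rw [Real.rpow_sub hq0, Real.rpow_sub hq0, Real.rpow_one]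
              field_simp
      refine tendsto_of_tendsto_of_tendsto_of_le_of_le' hgneg hg ?_ ?_
      · filter_upwards [hev] with q h using neg_le_of_abs_le h
      · filter_upwards [hev] with q h using le_of_abs_le h
    have key : Tendsto (fun q : ℝ => (⌊2 * Real.sqrt q⌋ : ℝ) / Real.sqrt q +
        (phiQ ℓ ρ T q 1 - (⌊2 * Real.sqrt q⌋ : ℝ) * q ^ (2*ρ)) / q ^ e) atTop (nhds 2) := by
      simpa using floor_sqrt_lim.add hD
    refine key.congr' ?_
    filter_upwards [eventually_ge_atTop (1:ℝ)] with q hq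
    have hq0 : (0:ℝ) < q := by linarith
    have hsqpos : (0:ℝ) < Real.sqrt q := Real.sqrt_pos.2 hq0
    have h2ρpos : (0:ℝ) < q ^ (2*ρ) := Real.rpow_pos_of_pos hq0 _
    have hsplit : q ^ e = q ^ (2*ρ) * Real.sqrt q := by
      rw [Real.sqrt_eq_rpow, ← Real.rpow_add hq0, he]
    have heq : (⌊2 * Real.sqrt q⌋ : ℝ) / Real.sqrt q
        = (⌊2 * Real.sqrt q⌋ : ℝ) * q ^ (2*ρ) / q ^ e := by
      rw [hsplit]; field_simp
    rw [heq, ← add_div]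
    ring_nf
  -- eventual lower bound on φ_q(1)/q^e
  have hΦbig : ∀ᶠ q : ℝ in atTop, (3/2 : ℝ) < phiQ ℓ ρ T q 1 / q ^ e :=
    L1.eventually (eventually_gt_nhds (by norm_num))
  -- eventual bound on the floor term
  have hA : ∀ᶠ q : ℝ in atTop, (⌊q ^ ρ⌋ : ℝ) * (ℓ - 1) / q ^ e ≤ 3/2 := by
    have hg : Tendsto (fun q : ℝ => (ℓ - 1) * q ^ (ρ - e)) atTop (nhds 0) := by
      simpa using (rpow_lim_zero (ρ - e) (by rw [he]; linarith)).const_mul (ℓ - 1)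
    have hsmall : ∀ᶠ q : ℝ in atTop, (ℓ - 1) * q ^ (ρ - e) ≤ 3/2 :=
      hg.eventually (eventually_le_nhds (by norm_num))
    filter_upwards [eventually_ge_atTop (1:ℝ), hsmall] with q hq hsm
    have hq0 : (0:ℝ) < q := by linarith
    have hepos : (0:ℝ) < q ^ e := Real.rpow_pos_of_pos hq0 e
    have hfl : (⌊q ^ ρ⌋ : ℝ) ≤ q ^ ρ := Int.floor_le _
    calc (⌊q ^ ρ⌋ : ℝ) * (ℓ - 1) / q ^ e ≤ q ^ ρ * (ℓ - 1) / q ^ e :=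
          (div_le_div_iff_of_pos_right hepos).mpr
            (mul_le_mul_of_nonneg_right hfl (by linarith))
      _ = (ℓ - 1) * q ^ (ρ - e) := by
          rw [Real.rpow_sub hq0]; ring
      _ ≤ 3/2 := hsm
  -- eventual bound on φ_q(⌊h/√ℓ⌋)/q^e
  have hC : ∀ᶠ q : ℝ in atTop,
      phiQ ℓ ρ T q ((⌊q ^ ρ / Real.sqrt ℓ⌋ : ℤ) : ℝ) / q ^ e ≤ 3/2 := by
    have hg : Tendsto (fun q : ℝ => (5 + 9*ℓ) * q ^ (-ρ)) atTop (nhds 0) := by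
      simpa using (rpow_lim_zero (-ρ) (by linarith)).const_mul (5 + 9*ℓ)
    have hsmall : ∀ᶠ q : ℝ in atTop, (5 + 9*ℓ) * q ^ (-ρ) ≤ 1/2 :=
      hg.eventually (eventually_le_nhds (by norm_num))
    filter_upwards [eventually_ge_atTop (1:ℝ), hsmall] with q hq hsm
    have hq0 : (0:ℝ) < q := by linarith
    have hepos : (0:ℝ) < q ^ e := Real.rpow_pos_of_pos hq0 e
    have hsq1 : (1:ℝ) ≤ Real.sqrt q := by
      rw [show (1:ℝ) = Real.sqrt 1 by simp]; exact Real.sqrt_le_sqrt hq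
    have hslpos : (0:ℝ) < Real.sqrt ℓ := by linarith
    have hm1 : (⌊2 * Real.sqrt q⌋ : ℝ) ≤ 2 * Real.sqrt q := Int.floor_le _
    have hm0 : (0:ℝ) ≤ (⌊2 * Real.sqrt q⌋ : ℝ) := by
      have : (0:ℤ) ≤ ⌊2 * Real.sqrt q⌋ := Int.floor_nonneg.2 (by positivity)
      exact_mod_cast this
    have hTq := hT q hq
    rw [abs_le] at hTq
    have hqρ0 : (0:ℝ) < q ^ ρ := Real.rpow_pos_of_pos hq0 ρ
    have hqρ1 : (1:ℝ) ≤ q ^ ρ := Real.one_le_rpow hq (by linarith)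
    set x₂ : ℝ := ((⌊q ^ ρ / Real.sqrt ℓ⌋ : ℤ) : ℝ) with hx₂def
    have hx₂le : x₂ ≤ q ^ ρ / Real.sqrt ℓ := Int.floor_le _
    have hx₂0 : (0:ℝ) ≤ x₂ := by
      have h0 : (0:ℤ) ≤ ⌊q ^ ρ / Real.sqrt ℓ⌋ := Int.floor_nonneg.2 (by positivity)
      rw [hx₂def]; exact_mod_cast h0
    have hy0 : (0:ℝ) ≤ q ^ ρ - x₂ * Real.sqrt ℓ := by
      have := (le_div_iff₀ hslpos).mp hx₂le
      linarith
    have hy1 : q ^ ρ - x₂ * Real.sqrt ℓ ≤ Real.sqrt ℓ := by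
      have h := Int.sub_one_lt_floor (q ^ ρ / Real.sqrt ℓ)
      have h2 : (q ^ ρ / Real.sqrt ℓ - 1) * Real.sqrt ℓ < x₂ * Real.sqrt ℓ :=
        mul_lt_mul_of_pos_right (by exact_mod_cast h) hslpos
      rw [sub_mul, div_mul_cancel₀ _ (ne_of_gt hslpos)] at h2
      linarith
    have hx₂h : x₂ ≤ q ^ ρ := hx₂le.trans (div_le_self hqρ0.le hsl1)
    -- bound on c
    have hcb : q + 1 - T q + (ℓ - 1) * ((⌊2 * Real.sqrt q⌋ : ℝ) - Real.sqrt ℓ)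
        ≤ q + 1 + 4 * Real.sqrt q + (ℓ - 1) * (2 * Real.sqrt q) := by
      have : (ℓ - 1) * ((⌊2 * Real.sqrt q⌋ : ℝ) - Real.sqrt ℓ) ≤ (ℓ - 1) * (2 * Real.sqrt q) :=
        mul_le_mul_of_nonneg_left (by linarith) (by linarith)
      linarith
    have hcb0 : (0:ℝ) ≤ q + 1 + 4 * Real.sqrt q + (ℓ - 1) * (2 * Real.sqrt q) := by
      have h0 : (0:ℝ) ≤ (ℓ - 1) * (2 * Real.sqrt q) :=
        mul_nonneg (by linarith) (by positivity)
      nlinarith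
    have hT3 : x₂ * (q + 1 - T q + (ℓ - 1) * ((⌊2 * Real.sqrt q⌋ : ℝ) - Real.sqrt ℓ))
        ≤ q ^ ρ * (q + 1 + 4 * Real.sqrt q + (ℓ - 1) * (2 * Real.sqrt q)) :=
      le_trans (mul_le_mul_of_nonneg_left hcb hx₂0) (mul_le_mul_of_nonneg_right hx₂h hcb0)
    have hT1 : (⌊2 * Real.sqrt q⌋ : ℝ) * (q ^ ρ - x₂ * Real.sqrt ℓ) ^ 2
        ≤ 2 * Real.sqrt q * ℓ := by
      have hy2 : (q ^ ρ - x₂ * Real.sqrt ℓ) ^ 2 ≤ ℓ := by nlinarith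
      have hℓ0 : (0:ℝ) ≤ ℓ := by linarith
      calc (⌊2 * Real.sqrt q⌋ : ℝ) * (q ^ ρ - x₂ * Real.sqrt ℓ) ^ 2
          ≤ (2 * Real.sqrt q) * (q ^ ρ - x₂ * Real.sqrt ℓ) ^ 2 :=
            mul_le_mul_of_nonneg_right hm1 (sq_nonneg _)
        _ ≤ 2 * Real.sqrt q * ℓ := mul_le_mul_of_nonneg_left hy2 (by positivity)
    have hT2 : 2 * (⌊2 * Real.sqrt q⌋ : ℝ) * Real.sqrt ℓ * (q ^ ρ - x₂ * Real.sqrt ℓ)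
        ≤ 4 * Real.sqrt q * ℓ := by
      nlinarith [mul_le_mul_of_nonneg_right hm1 (mul_nonneg hslpos.le hy0),
        mul_le_mul_of_nonneg_left hy1 (mul_nonneg (by positivity : (0:ℝ) ≤ 2 * Real.sqrt q) hslpos.le)]
    -- convert to rpow powers
    have e1 : q ^ (ρ + 1) = q ^ ρ * q := by rw [Real.rpow_add hq0, Real.rpow_one]
    have e2 : q ^ (ρ + 1/2) = q ^ ρ * Real.sqrt q := by
      rw [Real.rpow_add hq0, Real.sqrt_eq_rpow]
    have e3 : Real.sqrt q ≤ q ^ (ρ + 1/2) := by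
      rw [Real.sqrt_eq_rpow]
      exact Real.rpow_le_rpow_of_exponent_le hq (by linarith)
    have e4 : q ^ ρ ≤ q ^ (ρ + 1/2) := Real.rpow_le_rpow_of_exponent_le hq (by linarith)
    have hnum : phiQ ℓ ρ T q x₂ ≤ q ^ (ρ + 1) + (5 + 9*ℓ) * q ^ (ρ + 1/2) := by
      unfold phiQ
      have hsum := add_le_add (add_le_add (add_le_add hT1 hT2) hT3)
        (le_refl (q ^ ρ * (ℓ - 1)))
      refine le_trans hsum ?_
      rw [e1, e2]
      nlinarith [mul_le_mul_of_nonneg_left e3 (show (0:ℝ) ≤ 6 * ℓ by linarith),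
        mul_le_mul_of_nonneg_left e4 (show (0:ℝ) ≤ ℓ - 1 by linarith),
        mul_le_mul_of_nonneg_left e4 (show (0:ℝ) ≤ (1:ℝ) by norm_num),
        mul_le_mul_of_nonneg_left (mul_le_mul_of_nonneg_left hsq1 hqρ0.le)
          (show (0:ℝ) ≤ 2 * ℓ - 2 + 4 by linarith)]
    calc phiQ ℓ ρ T q x₂ / q ^ e ≤ (q ^ (ρ + 1) + (5 + 9*ℓ) * q ^ (ρ + 1/2)) / q ^ e :=
          (div_le_div_iff_of_pos_right hepos).mpr hnum
      _ = q ^ (1/2 - ρ) + (5 + 9*ℓ) * q ^ (-ρ) := by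
          rw [show (1/2 - ρ : ℝ) = (ρ + 1) - e by rw [he]; ring,
            show (-ρ : ℝ) = (ρ + 1/2) - e by rw [he]; ring,
            Real.rpow_sub hq0, Real.rpow_sub hq0]
          ring
      _ ≤ 1 + 1/2 := add_le_add (Real.rpow_le_one_of_one_le_of_nonpos hq (by linarith)) hsm
      _ = 3/2 := by norm_num
  -- conclude
  refine L1.congr' ?_
  filter_upwards [hΦbig, hA, hC, eventually_ge_atTop (1:ℝ)] with q h1 h2 h3 hq
  have hq0 : (0:ℝ) < q := by linarith
  have hepos : (0:ℝ) < q ^ e := Real.rpow_pos_of_pos hq0 e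
  have hAle : (⌊q ^ ρ⌋ : ℝ) * (ℓ - 1) ≤ phiQ ℓ ρ T q 1 :=
    (div_le_div_iff_of_pos_right hepos).mp (le_of_lt (lt_of_le_of_lt h2 h1))
  have hCle : phiQ ℓ ρ T q ((⌊q ^ ρ / Real.sqrt ℓ⌋ : ℤ) : ℝ) ≤ phiQ ℓ ρ T q 1 :=
    (div_le_div_iff_of_pos_right hepos).mp (le_of_lt (lt_of_le_of_lt h3 h1))
  show phiQ ℓ ρ T q 1 / q ^ e = MQ ℓ ρ T q / q ^ e
  rw [MQ, max_eq_right hAle, max_eq_left hCle]
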